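/- arXiv:2211.13647 — 4 statements merged into one kernel-verified Lean document; each statement's English description precedes it below -/
import Mathlib

section
/- Let H be a connected linear r-uniform hypergraph on n vertices. Then the spectral radius of its adjacency tensor satisfies ρ(H) ≤ (1/(r-1))·ρ(∂H), where ∂H is the shadow graph of H and ρ(∂H) is the spectral radius of its adjacency matrix. -/
open Finset

/-- The `i`-th component of `A(H) x^{r-1}`, where `A(H)` is the adjacency tensor
of the uniform hypergraph `H` (for an edge all of whose vertices are distinct,
the sum over the `(r-1)!` orderings cancels the `1/(r-1)!` coefficient). -/
noncomputable def tensorApply {V : Type*} [DecidableEq V]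
    (H : Finset (Finset V)) (x : V → ℂ) (i : V) : ℂ :=
  ∑ e ∈ H.filter (fun e => i ∈ e), ∏ v ∈ e.erase i, x v

/-- `lam` is an eigenvalue of the adjacency tensor of the `r`-uniform
hypergraph `H`: `A(H) x^{r-1} = lam · x^{[r-1]}` for some nonzero `x`. -/
def IsTensorEig {V : Type*} [DecidableEq V]
    (H : Finset (Finset V)) (r : ℕ) (lam : ℂ) : Prop :=
  ∃ x : V → ℂ, x ≠ 0 ∧ ∀ i, tensorApply H x i = lam * (x i) ^ (r - 1)

/-- The spectral radius of the adjacency tensor of `H`: the supremum of the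
moduli of its eigenvalues. -/
noncomputable def specRad {V : Type*} [DecidableEq V]
    (H : Finset (Finset V)) (r : ℕ) : ℝ :=
  sSup { m : ℝ | ∃ lam : ℂ, IsTensorEig H r lam ∧ m = ‖lam‖ }

-- `lam` is an eigenvalue of the adjacency matrix of the graph `G`.
open Classical in
def IsMatEig {V : Type*} [Fintype V] (G : SimpleGraph V) (lam : ℂ) : Prop :=
  ∃ x : V → ℂ, x ≠ 0 ∧
    (Matrix.of (fun a b => if G.Adj a b then (1 : ℂ) else 0)).mulVec x = lam • x

/-- The spectral radius of the adjacency matrix of a graph `G`. -/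
noncomputable def graphSpecRad {V : Type*} [Fintype V] (G : SimpleGraph V) : ℝ :=
  sSup { m : ℝ | ∃ lam : ℂ, IsMatEig G lam ∧ m = ‖lam‖ }

/-- The shadow graph of a hypergraph. -/
def shadowGraph {V : Type*} (H : Finset (Finset V)) : SimpleGraph V where
  Adj x y := x ≠ y ∧ ∃ e ∈ H, x ∈ e ∧ y ∈ e
  symm := by
    constructor
    rintro x y ⟨hxy, e, he, hx, hy⟩
    exact ⟨hxy.symm, e, he, hy, hx⟩
  loopless := by
    constructor
    rintro x ⟨hx, -⟩
    exact hx rfl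

/-- AM–GM for a product over a finset. -/
lemma amgm_aux {V : Type*} [DecidableEq V] (s : Finset V) (g : V → ℝ)
    (hg : ∀ v ∈ s, 0 ≤ g v) (m : ℕ) (hm : s.card = m) (hm0 : m ≠ 0) :
    ∏ v ∈ s, g v ≤ (∑ v ∈ s, g v ^ m) / m := by
  have key := Real.geom_mean_le_arith_mean_weighted s (fun _ => (m : ℝ)⁻¹)
    (fun v => g v ^ m) (fun i _ => by positivity)
    (by simp [hm, Finset.sum_const]
        field_simp)
    (fun i hi => pow_nonneg (hg i hi) m)
  calc ∏ v ∈ s, g v = ∏ v ∈ s, (g v ^ m) ^ ((m : ℝ)⁻¹) := by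
        refine Finset.prod_congr rfl fun v hv => ?_
        rw [Real.pow_rpow_inv_natCast (hg v hv) hm0]
    _ ≤ ∑ v ∈ s, (m : ℝ)⁻¹ * g v ^ m := key
    _ = (∑ v ∈ s, g v ^ m) / m := by rw [← Finset.mul_sum, inv_mul_eq_div]

/-- A crude (Gershgorin-type) bound on the moduli of graph eigenvalues. -/
lemma matEig_bound {V : Type*} [Fintype V] (G : SimpleGraph V) (lam : ℂ)
    (h : IsMatEig G lam) : ‖lam‖ ≤ Fintype.card V := by
  classical
  obtain ⟨x, hx0, hx⟩ := h
  obtain ⟨j, hj⟩ : ∃ j, x j ≠ 0 := by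
    by_contra hc
    push_neg at hc
    exact hx0 (funext hc)
  have hne : (Finset.univ : Finset V).Nonempty := ⟨j, mem_univ j⟩
  obtain ⟨i, -, hi⟩ := Finset.exists_max_image Finset.univ (fun v => ‖x v‖) hne
  have hxi : 0 < ‖x i‖ :=
    lt_of_lt_of_le (by simpa using hj) (hi j (mem_univ j))
  have key : ‖lam‖ * ‖x i‖ ≤ (Fintype.card V) * ‖x i‖ := by
    have h1 : lam * x i = ∑ k, (if G.Adj i k then (1:ℂ) else 0) * x k := by
      have := congrFun hx i
      simp only [Matrix.mulVec, dotProduct, Pi.smul_apply, smul_eq_mul] at this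
      rw [← this]; rfl
    calc ‖lam‖ * ‖x i‖ = ‖lam * x i‖ := (norm_mul _ _).symm
      _ = ‖∑ k, (if G.Adj i k then (1:ℂ) else 0) * x k‖ := by rw [h1]
      _ ≤ ∑ k, ‖(if G.Adj i k then (1:ℂ) else 0) * x k‖ :=
          norm_sum_le _ _
      _ ≤ ∑ _k : V, ‖x i‖ := by
          refine Finset.sum_le_sum fun k _ => ?_
          rw [norm_mul]
          by_cases hadj : G.Adj i k <;>
            simp [hadj, hi k (mem_univ k)]
      _ = (Fintype.card V) * ‖x i‖ := by
          rw [Finset.sum_const, card_univ, nsmul_eq_mul]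
  exact le_of_mul_le_mul_right (by simpa [mul_comm] using key) hxi

/-- Rayleigh quotient bound: a vector witnessing `μ ≤ ⟪Ay, y⟫/‖y‖²` for a real
symmetric matrix `A` forces the existence of a real eigenvalue `≥ μ`. -/
lemma rayleigh_aux {V : Type*} [Fintype V] [DecidableEq V] (A : Matrix V V ℝ)
    (hA : A.IsHermitian) (y : V → ℝ) (hy0 : y ≠ 0) (μ : ℝ)
    (h : μ * (∑ i, y i ^ 2) ≤ ∑ i, (A.mulVec y) i * y i) :
    ∃ (lam : ℝ) (z : V → ℝ), z ≠ 0 ∧ A.mulVec z = lam • z ∧ μ ≤ lam := by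
  classical
  set E := EuclideanSpace ℝ V
  set T : E →ₗ[ℝ] E := Matrix.toEuclideanLin A with hT
  have hsym : T.IsSymmetric := Matrix.isHermitian_iff_isSymmetric.mp hA
  set y' : E := (WithLp.equiv 2 (V → ℝ)).symm y with hy'
  have hy'0 : y' ≠ 0 := by
    intro hc
    apply hy0
    have := congrArg (WithLp.equiv 2 (V → ℝ)) hc
    simpa [hy'] using this
  haveI : Nontrivial E := nontrivial_of_ne y' 0 hy'0
  set lam : ℝ := ⨆ x : { x : E // x ≠ 0 }, RCLike.re (inner ℝ (T x) (x : E) : ℝ) / ‖(x : E)‖ ^ 2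
    with hlam
  have hEig : Module.End.HasEigenvalue T lam :=
    hsym.hasEigenvalue_iSup_of_finiteDimensional
  set T' : E →L[ℝ] E := LinearMap.toContinuousLinearMap T with hT'
  have hbdd : BddAbove (Set.range fun x : { x : E // x ≠ 0 } =>
      RCLike.re (inner ℝ (T x) (x : E) : ℝ) / ‖(x : E)‖ ^ 2) := by
    refine ⟨‖T'‖, ?_⟩
    rintro m ⟨⟨x, hx⟩, rfl⟩
    have hxn : 0 < ‖x‖ ^ 2 := pow_pos (norm_pos_iff.mpr hx) 2
    rw [div_le_iff₀ hxn]
    have h1 : (inner ℝ (T x) x : ℝ) ≤ ‖T x‖ * ‖x‖ := real_inner_le_norm _ _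
    have h2 : ‖T x‖ ≤ ‖T'‖ * ‖x‖ := T'.le_opNorm x
    have : (inner ℝ (T x) x : ℝ) ≤ ‖T'‖ * ‖x‖ ^ 2 := by
      calc (inner ℝ (T x) x : ℝ) ≤ ‖T x‖ * ‖x‖ := h1
        _ ≤ (‖T'‖ * ‖x‖) * ‖x‖ := by
            apply mul_le_mul_of_nonneg_right h2 (norm_nonneg x)
        _ = ‖T'‖ * ‖x‖ ^ 2 := by ring
    simpa using this
  have hμlam : μ ≤ lam := by
    have hn0 : 0 < ∑ i, y i ^ 2 := by
      obtain ⟨j, hj⟩ : ∃ j, y j ≠ 0 := by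
        by_contra hc; push_neg at hc; exact hy0 (funext hc)
      exact Finset.sum_pos' (fun i _ => sq_nonneg _)
        ⟨j, mem_univ j, by positivity⟩
    have hinner : RCLike.re (inner ℝ (T y') (y' : E) : ℝ) = ∑ i, (A.mulVec y) i * y i := by
      rw [hT, hy', PiLp.inner_apply]
      simp only [WithLp.equiv_symm_apply, Matrix.toEuclideanLin_apply_piLp_toLp, RCLike.inner_apply,
        PiLp.toLp_apply, starRingEnd_apply, star_trivial, map_sum,
        RCLike.re_to_real]
      exact Finset.sum_congr rfl fun i _ => mul_comm _ _
    have hnorm : ‖y'‖ ^ 2 = ∑ i, y i ^ 2 := by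
      rw [EuclideanSpace.norm_eq]
      rw [Real.sq_sqrt (by positivity)]
      simp [hy', sq_abs]
    refine le_trans ?_ (le_ciSup hbdd ⟨y', hy'0⟩)
    rw [hinner, hnorm, le_div_iff₀ hn0]
    exact h
  obtain ⟨z, hz⟩ := hEig.exists_hasEigenvector
  refine ⟨lam, WithLp.equiv 2 (V → ℝ) z, ?_, ?_, hμlam⟩
  · intro hc
    apply hz.2
    have := congrArg (WithLp.equiv 2 (V → ℝ)).symm hc
    simpa using this
  · have := hz.apply_eq_smul
    rw [hT] at this
    have h2 := congrArg (WithLp.equiv 2 (V → ℝ)) this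
    exact h2

/-- For a connected linear `r`-uniform hypergraph `H`,
`ρ(H) ≤ ρ(∂H)/(r-1)`. -/
theorem stmt_11 {V : Type*} [Fintype V] [DecidableEq V] (r : ℕ) (hr : 2 ≤ r)
    (H : Finset (Finset V))
    (huniform : ∀ e ∈ H, e.card = r)
    (hlinear : ∀ e ∈ H, ∀ f ∈ H, e ≠ f → (e ∩ f).card ≤ 1)
    (hconn : (shadowGraph H).Connected) :
    specRad H r ≤ (1 / ((r : ℝ) - 1)) * graphSpecRad (shadowGraph H) := by
  classical
  have hr1 : (1:ℕ) ≤ r := by omega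
  have hrpos : (0:ℝ) < (r:ℝ) - 1 := by
    have : (2:ℝ) ≤ (r:ℝ) := by exact_mod_cast hr
    linarith
  have hcast : ((r - 1 : ℕ) : ℝ) = (r:ℝ) - 1 := by
    rw [Nat.cast_sub hr1, Nat.cast_one]
  set G := shadowGraph H with hG
  have hV : Nonempty V := hconn.nonempty
  set A : Matrix V V ℝ := Matrix.of (fun a b => if G.Adj a b then (1:ℝ) else 0) with hA
  have hherm : A.IsHermitian := by
    ext a b
    simp only [Matrix.conjTranspose_apply, hA, Matrix.of_apply, star_trivial]
    by_cases hab : G.Adj a b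
    · simp [hab, hab.symm]
    · have hba : ¬ G.Adj b a := fun h => hab h.symm
      simp [hab, hba]
  set S : Set ℝ := { m : ℝ | ∃ lam : ℂ, IsMatEig G lam ∧ m = ‖lam‖ } with hS
  have hSbdd : BddAbove S := ⟨Fintype.card V, by
    rintro m ⟨l, hl, rfl⟩; exact matEig_bound G l hl⟩
  have hρ : graphSpecRad G = sSup S := rfl
  have hρ0 : 0 ≤ graphSpecRad G := by
    obtain ⟨c, hc⟩ := Module.End.exists_eigenvalue
      (Matrix.toLin' (Matrix.of fun a b : V => if G.Adj a b then (1:ℂ) else 0))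
    obtain ⟨v, hv⟩ := hc.exists_hasEigenvector
    have hveq : (Matrix.of fun a b : V => if G.Adj a b then (1:ℂ) else 0).mulVec v = c • v := by
      have := hv.apply_eq_smul
      rwa [Matrix.toLin'_apply] at this
    have hmem : ‖c‖ ∈ S := ⟨c, ⟨v, hv.2, hveq⟩, rfl⟩
    exact le_trans (norm_nonneg _) (le_csSup hSbdd hmem)
  rw [specRad]
  refine Real.sSup_le ?_ (mul_nonneg (by positivity) hρ0)
  rintro m ⟨lam, hlam, rfl⟩
  obtain ⟨x, hx0, heig⟩ := hlam
  set y : V → ℝ := fun i => ‖x i‖ ^ (r - 1) with hy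
  have hynn : ∀ i, 0 ≤ y i := fun i => pow_nonneg (norm_nonneg _) _
  have hy0 : y ≠ 0 := by
    obtain ⟨j, hj⟩ : ∃ j, x j ≠ 0 := by
      by_contra hc; push_neg at hc; exact hx0 (funext hc)
    intro hc
    have h0 : ‖x j‖ ^ (r - 1) = 0 := congrFun hc j
    have := pow_eq_zero_iff (n := r - 1) (by omega) |>.mp h0
    exact hj (by simpa using this)
  have step1 : ∀ i, ‖lam‖ * y i ≤ (A.mulVec y) i / ((r:ℝ) - 1) := by
    intro i
    have hcalc1 : ‖lam‖ * y i = ‖tensorApply H x i‖ := by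
      simp only [hy]
      rw [heig i, norm_mul, norm_pow]
    have hcalc2 : ‖tensorApply H x i‖ ≤
        ∑ e ∈ H.filter (fun e => i ∈ e), ∏ v ∈ e.erase i, ‖x v‖ := by
      refine le_trans (norm_sum_le _ _) (le_of_eq ?_)
      exact Finset.sum_congr rfl fun e _ => norm_prod _ _
    have hcalc3 : ∀ e ∈ H.filter (fun e => i ∈ e),
        ∏ v ∈ e.erase i, ‖x v‖ ≤ (∑ v ∈ e.erase i, y v) / ((r:ℝ) - 1) := by
      intro e he
      rw [mem_filter] at he
      have hcard : (e.erase i).card = r - 1 := by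
        rw [Finset.card_erase_of_mem he.2, huniform e he.1]
      have := amgm_aux (e.erase i) (fun v => ‖x v‖)
        (fun v _ => norm_nonneg _) (r - 1) hcard (by omega)
      rw [hcast] at this
      exact this
    have hcalc4 : ∑ e ∈ H.filter (fun e => i ∈ e), ∑ v ∈ e.erase i, y v ≤ (A.mulVec y) i := by
      have hdisj : (↑(H.filter (fun e => i ∈ e)) : Set (Finset V)).PairwiseDisjoint
          (fun e => e.erase i) := by
        intro e he f hf hef
        simp only [Finset.coe_filter, Set.mem_setOf_eq] at he hf
        simp only [Function.onFun]
        rw [Finset.disjoint_left]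
        intro v hv hv'
        have hvi : v ≠ i := (Finset.mem_erase.mp hv).1
        have hve : v ∈ e := (Finset.mem_erase.mp hv).2
        have hvf : v ∈ f := (Finset.mem_erase.mp hv').2
        have hsub : ({i, v} : Finset V) ⊆ e ∩ f := by
          intro w hw
          rcases Finset.mem_insert.mp hw with rfl | hw
          · exact Finset.mem_inter.mpr ⟨he.2, hf.2⟩
          · rw [Finset.mem_singleton] at hw; subst hw
            exact Finset.mem_inter.mpr ⟨hve, hvf⟩
        have h2 : 2 ≤ (e ∩ f).card := by
          calc 2 = ({i, v} : Finset V).card := by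
                rw [Finset.card_insert_of_notMem (by simp [Ne.symm hvi]),
                  Finset.card_singleton]
            _ ≤ (e ∩ f).card := Finset.card_le_card hsub
        have := hlinear e he.1 f hf.1 hef
        omega
      rw [← Finset.sum_biUnion hdisj]
      have hsub : (H.filter (fun e => i ∈ e)).biUnion (fun e => e.erase i) ⊆
          Finset.univ.filter (fun j => G.Adj i j) := by
        intro v hv
        rw [Finset.mem_biUnion] at hv
        obtain ⟨e, he, hve⟩ := hv
        rw [mem_filter] at he
        rw [Finset.mem_erase] at hve
        exact Finset.mem_filter.mpr ⟨Finset.mem_univ v,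
          ⟨Ne.symm hve.1, e, he.1, he.2, hve.2⟩⟩
      have hAy : (A.mulVec y) i = ∑ j ∈ Finset.univ.filter (fun j => G.Adj i j), y j := by
        simp only [Matrix.mulVec, dotProduct, hA, Matrix.of_apply, ite_mul, one_mul,
          zero_mul]
        rw [Finset.sum_filter]
      rw [hAy]
      exact Finset.sum_le_sum_of_subset_of_nonneg hsub (fun j _ _ => hynn j)
    calc ‖lam‖ * y i = ‖tensorApply H x i‖ := hcalc1
      _ ≤ ∑ e ∈ H.filter (fun e => i ∈ e), ∏ v ∈ e.erase i, ‖x v‖ := hcalc2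
      _ ≤ ∑ e ∈ H.filter (fun e => i ∈ e), (∑ v ∈ e.erase i, y v) / ((r:ℝ)-1) :=
          Finset.sum_le_sum hcalc3
      _ = (∑ e ∈ H.filter (fun e => i ∈ e), ∑ v ∈ e.erase i, y v) / ((r:ℝ)-1) := by
          rw [← Finset.sum_div]
      _ ≤ (A.mulVec y) i / ((r:ℝ)-1) := by gcongr
  set μ : ℝ := ((r:ℝ) - 1) * ‖lam‖ with hμ
  have hquad : μ * (∑ i, y i ^ 2) ≤ ∑ i, (A.mulVec y) i * y i := by
    rw [Finset.mul_sum]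
    refine Finset.sum_le_sum fun i _ => ?_
    have h1 : μ * y i ≤ (A.mulVec y) i := by
      have hstep := step1 i
      rw [le_div_iff₀ hrpos] at hstep
      calc μ * y i = (‖lam‖ * y i) * ((r:ℝ)-1) := by rw [hμ]; ring
        _ ≤ (A.mulVec y) i := hstep
    calc μ * y i ^ 2 = (μ * y i) * y i := by ring
      _ ≤ (A.mulVec y) i * y i := mul_le_mul_of_nonneg_right h1 (hynn i)
  obtain ⟨lam2, z, hz0, hzeig, hμlam⟩ := rayleigh_aux A hherm y hy0 μ hquad
  have hmem : |lam2| ∈ S := by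
    refine ⟨(lam2 : ℂ), ⟨fun i => (z i : ℂ), ?_, ?_⟩, by simp [Complex.norm_real]⟩
    · intro hc
      apply hz0
      funext i
      have := congrFun hc i
      simpa using this
    · funext i
      have hz' := congrFun hzeig i
      simp only [Matrix.mulVec, dotProduct, hA, Matrix.of_apply, Pi.smul_apply,
        smul_eq_mul] at hz'
      show ∑ j, (if G.Adj i j then (1:ℂ) else 0) * (z j : ℂ) = (lam2 : ℂ) * (z i : ℂ)
      calc ∑ j, (if G.Adj i j then (1:ℂ) else 0) * (z j : ℂ)
          = ((∑ j, (if G.Adj i j then (1:ℝ) else 0) * z j : ℝ) : ℂ) := by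
            push_cast
            exact Finset.sum_congr rfl fun j _ => by split <;> simp
        _ = ((lam2 * z i : ℝ) : ℂ) := by rw [hz']
        _ = (lam2 : ℂ) * (z i : ℂ) := by push_cast; ring
  have hfinal : μ ≤ graphSpecRad G := by
    rw [hρ]
    exact le_trans hμlam (le_trans (le_abs_self lam2) (le_csSup hSbdd hmem))
  have habs : ‖lam‖ * ((r:ℝ)-1) ≤ graphSpecRad G := by
    rw [hμ] at hfinal; linarith
  calc ‖lam‖ = (‖lam‖ * ((r:ℝ)-1)) / ((r:ℝ)-1) := by
        field_simp
    _ ≤ graphSpecRad G / ((r:ℝ)-1) := by gcongr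
    _ = 1/((r:ℝ)-1) * graphSpecRad G := by ring
end

section
/- Let H be a connected linear r-uniform hypergraph on n vertices. Then ρ(H) ≤ (n-1)/(r-1), with equality if and only if H is a 2-(n,r,1) design. -/
open Finset

set_option linter.unusedSectionVars false

namespace Stmt12

variable {V : Type*} [Fintype V] [DecidableEq V]

def deg (H : Finset (Finset V)) (i : V) : ℕ := (H.filter (fun e => i ∈ e)).card

lemma erase_disj {H : Finset (Finset V)}
    (hlinear : ∀ e ∈ H, ∀ f ∈ H, e ≠ f → (e ∩ f).card ≤ 1)
    {i : V} {e f : Finset V} (he : e ∈ H) (hf : f ∈ H) (hie : i ∈ e) (hif : i ∈ f)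
    (hne : e ≠ f) : Disjoint (e.erase i) (f.erase i) := by
  rw [Finset.disjoint_left]
  intro a hae haf
  have h1 : (e ∩ f).card ≤ 1 := hlinear e he f hf hne
  have ha : a ∈ e ∩ f :=
    Finset.mem_inter.2 ⟨Finset.mem_of_mem_erase hae, Finset.mem_of_mem_erase haf⟩
  have hi : i ∈ e ∩ f := Finset.mem_inter.2 ⟨hie, hif⟩
  have hai : a ≠ i := Finset.ne_of_mem_erase hae
  have : 1 < (e ∩ f).card := Finset.one_lt_card.2 ⟨a, ha, i, hi, hai⟩
  omega

lemma card_biUnion_erase {H : Finset (Finset V)} {r : ℕ}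
    (huniform : ∀ e ∈ H, e.card = r)
    (hlinear : ∀ e ∈ H, ∀ f ∈ H, e ≠ f → (e ∩ f).card ≤ 1)
    (i : V) :
    ((H.filter (fun e => i ∈ e)).biUnion (fun e => e.erase i)).card = deg H i * (r - 1) := by
  rw [Finset.card_biUnion ?hdisj]
  case hdisj =>
    intro e he f hf hne
    have he' := Finset.mem_filter.1 he
    have hf' := Finset.mem_filter.1 hf
    exact erase_disj hlinear he'.1 hf'.1 he'.2 hf'.2 hne
  rw [Finset.sum_congr rfl (g := fun _ => r - 1) (fun e he => by
      have he' := Finset.mem_filter.1 he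
      rw [Finset.card_erase_of_mem he'.2, huniform e he'.1]),
    Finset.sum_const, smul_eq_mul]
  rfl

lemma biUnion_erase_subset (H : Finset (Finset V)) (i : V) :
    ((H.filter (fun e => i ∈ e)).biUnion (fun e => e.erase i)) ⊆ Finset.univ.erase i := by
  intro a ha
  obtain ⟨e, he, hae⟩ := Finset.mem_biUnion.1 ha
  exact Finset.mem_erase.2 ⟨Finset.ne_of_mem_erase hae, Finset.mem_univ a⟩

lemma deg_mul_le {H : Finset (Finset V)} {r : ℕ}
    (huniform : ∀ e ∈ H, e.card = r)
    (hlinear : ∀ e ∈ H, ∀ f ∈ H, e ≠ f → (e ∩ f).card ≤ 1)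
    (i : V) : deg H i * (r - 1) ≤ Fintype.card V - 1 := by
  rw [← card_biUnion_erase huniform hlinear i]
  calc ((H.filter (fun e => i ∈ e)).biUnion (fun e => e.erase i)).card
      ≤ (Finset.univ.erase i).card := Finset.card_le_card (biUnion_erase_subset H i)
    _ = Fintype.card V - 1 := by
        rw [Finset.card_erase_of_mem (Finset.mem_univ i), Finset.card_univ]

lemma full_iff {H : Finset (Finset V)} {r : ℕ}
    (huniform : ∀ e ∈ H, e.card = r)
    (hlinear : ∀ e ∈ H, ∀ f ∈ H, e ≠ f → (e ∩ f).card ≤ 1)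
    (i : V) :
    deg H i * (r - 1) = Fintype.card V - 1 ↔ ∀ y, y ≠ i → ∃ e ∈ H, i ∈ e ∧ y ∈ e := by
  constructor
  · intro h y hy
    have hcard : (Finset.univ.erase i).card ≤
        ((H.filter (fun e => i ∈ e)).biUnion (fun e => e.erase i)).card := by
      rw [card_biUnion_erase huniform hlinear i, h,
        Finset.card_erase_of_mem (Finset.mem_univ i), Finset.card_univ]
    have heq := Finset.eq_of_subset_of_card_le (biUnion_erase_subset H i) hcard
    have hy' : y ∈ (H.filter (fun e => i ∈ e)).biUnion (fun e => e.erase i) := by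
      rw [heq]; exact Finset.mem_erase.2 ⟨hy, Finset.mem_univ y⟩
    obtain ⟨e, he, hye⟩ := Finset.mem_biUnion.1 hy'
    have he' := Finset.mem_filter.1 he
    exact ⟨e, he'.1, he'.2, Finset.mem_of_mem_erase hye⟩
  · intro h
    rw [← card_biUnion_erase huniform hlinear i]
    have heq : ((H.filter (fun e => i ∈ e)).biUnion (fun e => e.erase i))
        = Finset.univ.erase i := by
      apply Finset.Subset.antisymm (biUnion_erase_subset H i)
      intro y hy
      obtain ⟨hyne, -⟩ := Finset.mem_erase.1 hy
      obtain ⟨e, he, hie, hye⟩ := h y hyne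
      exact Finset.mem_biUnion.2
        ⟨e, Finset.mem_filter.2 ⟨he, hie⟩, Finset.mem_erase.2 ⟨hyne, hye⟩⟩
    rw [heq, Finset.card_erase_of_mem (Finset.mem_univ i), Finset.card_univ]

lemma deg_le_B {H : Finset (Finset V)} {r : ℕ} (hr : 2 ≤ r)
    (huniform : ∀ e ∈ H, e.card = r)
    (hlinear : ∀ e ∈ H, ∀ f ∈ H, e ≠ f → (e ∩ f).card ≤ 1)
    (hn : 1 ≤ Fintype.card V)
    (i : V) : (deg H i : ℝ) ≤ ((Fintype.card V : ℝ) - 1) / ((r : ℝ) - 1) := by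
  have hr1 : (0:ℝ) < (r:ℝ) - 1 := by
    have : (2:ℝ) ≤ (r:ℝ) := by exact_mod_cast hr
    linarith
  rw [le_div_iff₀ hr1]
  have h3 := deg_mul_le huniform hlinear i
  have h4 := (Nat.cast_le (α := ℝ)).2 h3
  rw [Nat.cast_mul, Nat.cast_sub (by omega : 1 ≤ r), Nat.cast_sub hn] at h4
  simpa using h4

lemma tensor_abs_le {H : Finset (Finset V)} {r : ℕ}
    (huniform : ∀ e ∈ H, e.card = r)
    (x : V → ℂ) (v : V) (m : ℝ) (hmax : ∀ j, ‖x j‖ ≤ m) :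
    ‖tensorApply H x v‖ ≤ (deg H v : ℝ) * m ^ (r - 1) := by
  unfold tensorApply
  refine le_trans (norm_sum_le _ _) ?_
  have hterm : ∀ e ∈ H.filter (fun e => v ∈ e),
      ‖∏ u ∈ e.erase v, x u‖ ≤ m ^ (r - 1) := by
    intro e he
    have he' := Finset.mem_filter.1 he
    have hcard : (e.erase v).card = r - 1 := by
      rw [Finset.card_erase_of_mem he'.2, huniform e he'.1]
    rw [norm_prod]
    calc ∏ u ∈ e.erase v, ‖x u‖ ≤ ∏ _u ∈ e.erase v, m :=
        Finset.prod_le_prod (fun u _ => norm_nonneg _) (fun u _ => hmax u)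
      _ = m ^ (r - 1) := by rw [Finset.prod_const, hcard]
  calc ∑ e ∈ H.filter (fun e => v ∈ e), ‖∏ u ∈ e.erase v, x u‖
      ≤ (H.filter (fun e => v ∈ e)).card • (m ^ (r - 1)) :=
        Finset.sum_le_card_nsmul _ _ _ hterm
    _ = (deg H v : ℝ) * m ^ (r - 1) := by rw [nsmul_eq_mul]; rfl

lemma eig_abs_le {H : Finset (Finset V)} {r : ℕ} (hr : 2 ≤ r)
    (huniform : ∀ e ∈ H, e.card = r)
    (hlinear : ∀ e ∈ H, ∀ f ∈ H, e ≠ f → (e ∩ f).card ≤ 1)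
    {lam : ℂ} (h : IsTensorEig H r lam) :
    ‖lam‖ ≤ ((Fintype.card V : ℝ) - 1) / ((r : ℝ) - 1) := by
  obtain ⟨x, hx0, hx⟩ := h
  obtain ⟨j, hj⟩ := Function.ne_iff.1 hx0
  have hj : x j ≠ 0 := hj
  obtain ⟨v, -, hv⟩ := Finset.exists_max_image Finset.univ (fun i => ‖x i‖)
    ⟨j, Finset.mem_univ j⟩
  have hmax : ∀ i, ‖x i‖ ≤ ‖x v‖ := fun i => hv i (Finset.mem_univ i)
  have hm0 : 0 < ‖x v‖ := lt_of_lt_of_le (norm_pos_iff.2 hj) (hmax j)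
  have h1 : ‖lam‖ * ‖x v‖ ^ (r - 1)
      ≤ (deg H v : ℝ) * ‖x v‖ ^ (r - 1) := by
    calc ‖lam‖ * ‖x v‖ ^ (r - 1)
        = ‖lam * (x v) ^ (r - 1)‖ := by rw [norm_mul, norm_pow]
      _ = ‖tensorApply H x v‖ := by rw [hx v]
      _ ≤ _ := tensor_abs_le huniform x v _ hmax
  have h2 : ‖lam‖ ≤ (deg H v : ℝ) :=
    le_of_mul_le_mul_right h1 (pow_pos hm0 _)
  have : Nonempty V := ⟨j⟩
  have hn : 1 ≤ Fintype.card V := Fintype.card_pos (α := V)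
  exact h2.trans (deg_le_B hr huniform hlinear hn v)

lemma tensorApply_smul {H : Finset (Finset V)} {r : ℕ}
    (huniform : ∀ e ∈ H, e.card = r) (c : ℂ) (x : V → ℂ) (i : V) :
    tensorApply H (c • x) i = c ^ (r - 1) * tensorApply H x i := by
  unfold tensorApply
  rw [Finset.mul_sum]
  refine Finset.sum_congr rfl fun e he => ?_
  have he' := Finset.mem_filter.1 he
  have hcard : (e.erase i).card = r - 1 := by
    rw [Finset.card_erase_of_mem he'.2, huniform e he'.1]
  calc ∏ v ∈ e.erase i, (c • x) v = ∏ v ∈ e.erase i, (c * x v) := by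
        simp [Pi.smul_apply, smul_eq_mul]
    _ = c ^ (e.erase i).card * ∏ v ∈ e.erase i, x v := by
        rw [Finset.prod_mul_distrib, Finset.prod_const]
    _ = _ := by rw [hcard]

end Stmt12

namespace Stmt12

lemma exists_eig_attained {V : Type*} [Fintype V] [DecidableEq V] {H : Finset (Finset V)}
    {r : ℕ} (hr : 2 ≤ r)
    (huniform : ∀ e ∈ H, e.card = r)
    (hlinear : ∀ e ∈ H, ∀ f ∈ H, e ≠ f → (e ∩ f).card ≤ 1)
    (hSne : {m : ℝ | ∃ lam, IsTensorEig H r lam ∧ m = ‖lam‖}.Nonempty) :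
    ∃ lam, IsTensorEig H r lam ∧ ‖lam‖ = specRad H r := by
  set B := ((Fintype.card V : ℝ) - 1) / ((r : ℝ) - 1) with hB
  set S := {m : ℝ | ∃ lam, IsTensorEig H r lam ∧ m = ‖lam‖} with hS
  set K : Set (ℂ × (V → ℂ)) :=
    {p | (∀ i, tensorApply H p.2 i = p.1 * (p.2 i) ^ (r - 1)) ∧ ‖p.2‖ = 1} with hK
  have hcont : ∀ i, Continuous fun p : ℂ × (V → ℂ) => tensorApply H p.2 i := by
    intro i
    unfold tensorApply
    exact continuous_finset_sum _ fun e _ =>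
      continuous_finset_prod _ fun v _ => (continuous_apply v).comp continuous_snd
  have hKclosed : IsClosed K := by
    have h1 : IsClosed {p : ℂ × (V → ℂ) | ∀ i, tensorApply H p.2 i = p.1 * (p.2 i) ^ (r - 1)} := by
      rw [Set.setOf_forall]
      exact isClosed_iInter fun i => isClosed_eq (hcont i)
        (continuous_fst.mul (((continuous_apply i).comp continuous_snd).pow _))
    have h2 : IsClosed {p : ℂ × (V → ℂ) | ‖p.2‖ = 1} :=
      isClosed_eq continuous_snd.norm continuous_const
    exact h1.inter h2
  have hmemS : ∀ p ∈ K, ‖p.1‖ ∈ S := by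
    rintro p ⟨hp1, hp2⟩
    have hx0 : p.2 ≠ 0 := by
      intro h0
      rw [h0, norm_zero] at hp2
      norm_num at hp2
    exact ⟨p.1, ⟨p.2, hx0, hp1⟩, rfl⟩
  have hKsub : K ⊆ Metric.closedBall 0 (B + 1) := by
    rintro p ⟨hp1, hp2⟩
    have hx0 : p.2 ≠ 0 := by
      intro h0
      rw [h0, norm_zero] at hp2
      norm_num at hp2
    have hb : ‖p.1‖ ≤ B := eig_abs_le hr huniform hlinear ⟨p.2, hx0, hp1⟩
    have hB0 : (0:ℝ) ≤ B := (norm_nonneg p.1).trans hb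
    rw [Metric.mem_closedBall, dist_zero_right, Prod.norm_def]
    refine sup_le ?_ ?_
    · linarith
    · rw [hp2]; linarith
  have hKcpt : IsCompact K :=
    Metric.isCompact_of_isClosed_isBounded hKclosed (Metric.isBounded_closedBall.subset hKsub)
  have hSimg : S = (fun p : ℂ × (V → ℂ) => ‖p.1‖) '' K := by
    ext mval
    constructor
    · rintro ⟨lam, ⟨x, hx0, hx⟩, rfl⟩
      have hxn : (0:ℝ) < ‖x‖ := norm_pos_iff.2 hx0
      set c : ℂ := ((‖x‖⁻¹ : ℝ) : ℂ) with hc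
      refine ⟨(lam, c • x), ⟨?_, ?_⟩, rfl⟩
      · intro i
        rw [tensorApply_smul huniform c x i, hx i]
        simp only [Pi.smul_apply, smul_eq_mul, mul_pow]
        ring
      · rw [norm_smul, hc, Complex.norm_real, norm_inv, norm_norm, inv_mul_cancel₀ hxn.ne']
    · rintro ⟨p, hp, rfl⟩
      exact hmemS p hp
  have hScpt : IsCompact S := by
    rw [hSimg]
    exact hKcpt.image (continuous_norm.comp continuous_fst)
  have hmem := hScpt.sSup_mem hSne
  obtain ⟨lam, hlam, hEq⟩ := hmem
  exact ⟨lam, hlam, hEq.symm⟩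

end Stmt12

namespace Stmt12

lemma design_of_attained {V : Type*} [Fintype V] [DecidableEq V] {H : Finset (Finset V)}
    {r : ℕ} (hr : 2 ≤ r)
    (huniform : ∀ e ∈ H, e.card = r)
    (hlinear : ∀ e ∈ H, ∀ f ∈ H, e ≠ f → (e ∩ f).card ≤ 1)
    (hconn : (shadowGraph H).Connected)
    {lam : ℂ} {x : V → ℂ} (hx0 : x ≠ 0)
    (heig : ∀ i, tensorApply H x i = lam * (x i) ^ (r - 1))
    (habs : ‖lam‖ = ((Fintype.card V : ℝ) - 1) / ((r : ℝ) - 1)) :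
    ∀ a b : V, a ≠ b → ∃! e, e ∈ H ∧ a ∈ e ∧ b ∈ e := by
  have hVne : Nonempty V := hconn.nonempty
  have hn : 1 ≤ Fintype.card V := Fintype.card_pos
  have hr1 : (0:ℝ) < (r:ℝ) - 1 := by
    have : (2:ℝ) ≤ (r:ℝ) := by exact_mod_cast hr
    linarith
  set B := ((Fintype.card V : ℝ) - 1) / ((r : ℝ) - 1) with hB
  obtain ⟨j, hj⟩ := Function.ne_iff.1 hx0
  have hj : x j ≠ 0 := hj
  obtain ⟨v0, -, hv0⟩ := Finset.exists_max_image Finset.univ (fun i => ‖x i‖)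
    ⟨j, Finset.mem_univ j⟩
  set m := ‖x v0‖ with hm
  have hmax : ∀ i, ‖x i‖ ≤ m := fun i => hv0 i (Finset.mem_univ i)
  have hm0 : 0 < m := lt_of_lt_of_le (norm_pos_iff.2 hj) (hmax j)
  have hmpow : 0 < m ^ (r - 1) := pow_pos hm0 _
  -- the key local step
  have step : ∀ w, ‖x w‖ = m →
      (deg H w * (r - 1) = Fintype.card V - 1) ∧
      ∀ u, (shadowGraph H).Adj w u → ‖x u‖ = m := by
    intro w hw
    have hterm : ∀ e ∈ H.filter (fun e => w ∈ e),
        ∏ u ∈ e.erase w, ‖x u‖ ≤ m ^ (r - 1) := by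
      intro e he
      have he' := Finset.mem_filter.1 he
      have hcard : (e.erase w).card = r - 1 := by
        rw [Finset.card_erase_of_mem he'.2, huniform e he'.1]
      calc ∏ u ∈ e.erase w, ‖x u‖ ≤ ∏ _u ∈ e.erase w, m :=
          Finset.prod_le_prod (fun u _ => norm_nonneg _) (fun u _ => hmax u)
        _ = m ^ (r - 1) := by rw [Finset.prod_const, hcard]
    have hBm : B * m ^ (r - 1) = ‖tensorApply H x w‖ := by
      rw [heig w, norm_mul, norm_pow, habs, hw]
    have habs_le : ‖tensorApply H x w‖
        ≤ ∑ e ∈ H.filter (fun e => w ∈ e), ∏ u ∈ e.erase w, ‖x u‖ := by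
      unfold tensorApply
      refine le_trans (norm_sum_le _ _) (le_of_eq ?_)
      exact Finset.sum_congr rfl fun e _ => norm_prod _ _
    have hsum_le : ∑ e ∈ H.filter (fun e => w ∈ e), ∏ u ∈ e.erase w, ‖x u‖
        ≤ (deg H w : ℝ) * m ^ (r - 1) := by
      calc ∑ e ∈ H.filter (fun e => w ∈ e), ∏ u ∈ e.erase w, ‖x u‖
          ≤ (H.filter (fun e => w ∈ e)).card • (m ^ (r - 1)) :=
            Finset.sum_le_card_nsmul _ _ _ hterm
        _ = (deg H w : ℝ) * m ^ (r - 1) := by rw [nsmul_eq_mul]; rfl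
    have hdegB : (deg H w : ℝ) ≤ B := deg_le_B hr huniform hlinear hn w
    have hdeg_eq : (deg H w : ℝ) = B := by
      have h1 : B * m ^ (r - 1) ≤ (deg H w : ℝ) * m ^ (r - 1) := by
        rw [hBm]; exact le_trans habs_le hsum_le
      have h2 : (deg H w : ℝ) * m ^ (r - 1) ≤ B * m ^ (r - 1) :=
        mul_le_mul_of_nonneg_right hdegB hmpow.le
      have := le_antisymm h2 h1
      exact mul_right_cancel₀ hmpow.ne' this
    have hsum_eq : ∑ e ∈ H.filter (fun e => w ∈ e), ∏ u ∈ e.erase w, ‖x u‖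
        = (deg H w : ℝ) * m ^ (r - 1) := by
      refine le_antisymm hsum_le ?_
      rw [hdeg_eq, hBm]
      exact habs_le
    have hterm_eq : ∀ e ∈ H.filter (fun e => w ∈ e),
        ∏ u ∈ e.erase w, ‖x u‖ = m ^ (r - 1) := by
      intro e he
      by_contra hne
      have hlt : ∏ u ∈ e.erase w, ‖x u‖ < m ^ (r - 1) :=
        lt_of_le_of_ne (hterm e he) hne
      have hstrict : ∑ e ∈ H.filter (fun e => w ∈ e), ∏ u ∈ e.erase w, ‖x u‖
          < ∑ _e ∈ H.filter (fun e => w ∈ e), m ^ (r - 1) :=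
        Finset.sum_lt_sum hterm ⟨e, he, hlt⟩
      rw [Finset.sum_const, nsmul_eq_mul] at hstrict
      rw [hsum_eq] at hstrict
      exact absurd hstrict (by exact lt_irrefl _)
    have hfactor : ∀ e ∈ H.filter (fun e => w ∈ e), ∀ u ∈ e.erase w,
        ‖x u‖ = m := by
      intro e he u hu
      by_contra hneu
      have hltu : ‖x u‖ < m := lt_of_le_of_ne (hmax u) hneu
      have h1 := hterm_eq e he
      have he' := Finset.mem_filter.1 he
      have hcard : (e.erase w).card = r - 1 := by
        rw [Finset.card_erase_of_mem he'.2, huniform e he'.1]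
      have hcard2 : ((e.erase w).erase u).card + 1 = r - 1 := by
        rw [Finset.card_erase_add_one hu, hcard]
      have hrest : ∏ z ∈ (e.erase w).erase u, ‖x z‖
          ≤ m ^ ((e.erase w).erase u).card := by
        calc ∏ z ∈ (e.erase w).erase u, ‖x z‖
            ≤ ∏ _z ∈ (e.erase w).erase u, m :=
              Finset.prod_le_prod (fun z _ => norm_nonneg _) (fun z _ => hmax z)
          _ = _ := Finset.prod_const m
      have hsplit : ∏ z ∈ e.erase w, ‖x z‖
          = ‖x u‖ * ∏ z ∈ (e.erase w).erase u, ‖x z‖ :=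
        (Finset.mul_prod_erase _ _ hu).symm
      have hlt2 : ∏ z ∈ e.erase w, ‖x z‖ < m ^ (r - 1) := by
        calc ∏ z ∈ e.erase w, ‖x z‖
            = ‖x u‖ * ∏ z ∈ (e.erase w).erase u, ‖x z‖ := hsplit
          _ ≤ ‖x u‖ * m ^ ((e.erase w).erase u).card :=
              mul_le_mul_of_nonneg_left hrest (norm_nonneg _)
          _ < m * m ^ ((e.erase w).erase u).card :=
              mul_lt_mul_of_pos_right hltu (pow_pos hm0 _)
          _ = m ^ (((e.erase w).erase u).card + 1) := by rw [pow_succ, mul_comm]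
          _ = m ^ (r - 1) := by rw [hcard2]
      rw [h1] at hlt2
      exact lt_irrefl _ hlt2
    constructor
    · have hrealeq : (deg H w : ℝ) * ((r:ℝ) - 1) = (Fintype.card V : ℝ) - 1 := by
        rw [hdeg_eq, hB]
        field_simp
      have hcast : ((deg H w * (r - 1) : ℕ) : ℝ) = ((Fintype.card V - 1 : ℕ) : ℝ) := by
        rw [Nat.cast_mul, Nat.cast_sub (by omega : 1 ≤ r), Nat.cast_sub hn]
        push_cast
        linarith
      exact_mod_cast hcast
    · rintro u ⟨hne, e, he, hwe, hue⟩
      exact hfactor e (Finset.mem_filter.2 ⟨he, hwe⟩) u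
        (Finset.mem_erase.2 ⟨fun h => hne h.symm, hue⟩)
  -- propagate along walks
  have hall : ∀ a b : V, (shadowGraph H).Walk a b → ‖x a‖ = m →
      ‖x b‖ = m := by
    intro a b p
    induction p with
    | nil => exact id
    | cons h p ih => intro ha; exact ih ((step _ ha).2 _ h)
  have hallm : ∀ w, ‖x w‖ = m := by
    intro w
    exact (hconn v0 w).elim fun p => hall v0 w p rfl
  -- design
  intro a b hab
  obtain ⟨e, he, hae, hbe⟩ := (full_iff huniform hlinear a).1 (step a (hallm a)).1 b (Ne.symm hab)
  refine ⟨e, ⟨he, hae, hbe⟩, ?_⟩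
  rintro f ⟨hf, haf, hbf⟩
  by_contra hfe
  have h1 : (f ∩ e).card ≤ 1 := hlinear f hf e he hfe
  have : 1 < (f ∩ e).card := Finset.one_lt_card.2
    ⟨a, Finset.mem_inter.2 ⟨haf, hae⟩, b, Finset.mem_inter.2 ⟨hbf, hbe⟩, hab⟩
  omega

end Stmt12

namespace Stmt12

lemma design_eig {V : Type*} [Fintype V] [DecidableEq V] {H : Finset (Finset V)}
    {r : ℕ} (hr : 2 ≤ r)
    (huniform : ∀ e ∈ H, e.card = r)
    (hlinear : ∀ e ∈ H, ∀ f ∈ H, e ≠ f → (e ∩ f).card ≤ 1)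
    (hVne : Nonempty V)
    (hdesign : ∀ a b : V, a ≠ b → ∃! e, e ∈ H ∧ a ∈ e ∧ b ∈ e) :
    ∃ lam : ℂ, IsTensorEig H r lam ∧
      ‖lam‖ = ((Fintype.card V : ℝ) - 1) / ((r : ℝ) - 1) := by
  have hn : 1 ≤ Fintype.card V := Fintype.card_pos
  have hrC : ((r : ℂ) - 1) ≠ 0 := by
    have : (r : ℂ) ≠ 1 := by
      intro h
      have : (r : ℂ) = ((1 : ℕ) : ℂ) := by rw [h]; norm_num
      have := Nat.cast_injective (R := ℂ) this
      omega
    exact sub_ne_zero.2 this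
  set lam : ℂ := ((Fintype.card V : ℂ) - 1) / ((r : ℂ) - 1) with hlam
  have hfull : ∀ i, deg H i * (r - 1) = Fintype.card V - 1 := by
    intro i
    rw [full_iff huniform hlinear i]
    intro y hy
    obtain ⟨e, ⟨he, hie, hye⟩, -⟩ := hdesign i y (fun h => hy h.symm)
    exact ⟨e, he, hie, hye⟩
  have hdegC : ∀ i, (deg H i : ℂ) = lam := by
    intro i
    rw [hlam, eq_div_iff hrC]
    have := hfull i
    have hcast : ((deg H i * (r - 1) : ℕ) : ℂ) = ((Fintype.card V - 1 : ℕ) : ℂ) := by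
      exact_mod_cast congrArg (Nat.cast (R := ℂ)) this
    rw [Nat.cast_mul, Nat.cast_sub (by omega : 1 ≤ r), Nat.cast_sub hn] at hcast
    exact_mod_cast hcast
  refine ⟨lam, ⟨fun _ => 1, ?_, ?_⟩, ?_⟩
  · intro h
    have := congrFun h (Classical.arbitrary V)
    simp at this
  · intro i
    have : tensorApply H (fun _ => (1:ℂ)) i = (deg H i : ℂ) := by
      unfold tensorApply
      simp [deg]
    rw [this, hdegC i]
    simp
  · have : lam = (((((Fintype.card V : ℝ) - 1) / ((r : ℝ) - 1)) : ℝ) : ℂ) := by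
      rw [hlam]
      push_cast
      ring
    rw [this, Complex.norm_real, Real.norm_eq_abs, abs_of_nonneg]
    have hr1 : (0:ℝ) < (r:ℝ) - 1 := by
      have : (2:ℝ) ≤ (r:ℝ) := by exact_mod_cast hr
      linarith
    apply div_nonneg _ hr1.le
    have : (1:ℝ) ≤ (Fintype.card V : ℝ) := by exact_mod_cast hn
    linarith

end Stmt12


/-- For a connected linear `r`-uniform hypergraph on `n` vertices,
`ρ(H) ≤ (n-1)/(r-1)`, with equality iff `H` is a `2-(n,r,1)` design. -/
theorem stmt_12 {V : Type*} [Fintype V] [DecidableEq V] (r : ℕ) (hr : 2 ≤ r)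
    (H : Finset (Finset V))
    (huniform : ∀ e ∈ H, e.card = r)
    (hlinear : ∀ e ∈ H, ∀ f ∈ H, e ≠ f → (e ∩ f).card ≤ 1)
    (hconn : (shadowGraph H).Connected) :
    specRad H r ≤ ((Fintype.card V : ℝ) - 1) / ((r : ℝ) - 1) ∧
    (specRad H r = ((Fintype.card V : ℝ) - 1) / ((r : ℝ) - 1) ↔
      ∀ x y : V, x ≠ y → ∃! e, e ∈ H ∧ x ∈ e ∧ y ∈ e) := by
  have hVne : Nonempty V := hconn.nonempty
  have hn : 1 ≤ Fintype.card V := Fintype.card_pos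
  have hr1 : (0:ℝ) < (r:ℝ) - 1 := by
    have : (2:ℝ) ≤ (r:ℝ) := by exact_mod_cast hr
    linarith
  set B := ((Fintype.card V : ℝ) - 1) / ((r : ℝ) - 1) with hB
  have hB0 : (0:ℝ) ≤ B := by
    apply div_nonneg _ hr1.le
    have : (1:ℝ) ≤ (Fintype.card V : ℝ) := by exact_mod_cast hn
    linarith
  set S := {m : ℝ | ∃ lam : ℂ, IsTensorEig H r lam ∧ m = ‖lam‖} with hS
  have hbound : ∀ mm ∈ S, mm ≤ B := by
    rintro mm ⟨lam, hl, rfl⟩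
    exact Stmt12.eig_abs_le hr huniform hlinear hl
  have hspec : specRad H r = sSup S := rfl
  have h1 : specRad H r ≤ B := by
    rw [hspec]
    exact Real.sSup_le hbound hB0
  refine ⟨h1, ?_, ?_⟩
  · -- equality implies design
    intro hEq
    by_cases hcard : Fintype.card V ≤ 1
    · intro a b hab
      have : Subsingleton V := Fintype.card_le_one_iff_subsingleton.1 hcard
      exact absurd (Subsingleton.elim a b) hab
    · push_neg at hcard
      have hBpos : (0:ℝ) < B := by
        apply div_pos _ hr1
        have : (2:ℝ) ≤ (Fintype.card V : ℝ) := by exact_mod_cast hcard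
        linarith
      have hSne : S.Nonempty := by
        by_contra hne
        rw [Set.not_nonempty_iff_eq_empty] at hne
        rw [hspec, hne, Real.sSup_empty] at hEq
        linarith
      obtain ⟨lam, ⟨x, hx0, heig⟩, habs⟩ :=
        Stmt12.exists_eig_attained hr huniform hlinear hSne
      rw [hEq] at habs
      exact Stmt12.design_of_attained hr huniform hlinear hconn hx0 heig habs
  · -- design implies equality
    intro hdesign
    obtain ⟨lam, hlam, habs⟩ := Stmt12.design_eig hr huniform hlinear hVne hdesign
    have hmem : B ∈ S := ⟨lam, hlam, habs.symm⟩
    rw [hspec]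
    exact le_antisymm (Real.sSup_le hbound hB0) (le_csSup ⟨B, hbound⟩ hmem)
end

section
/- Let F be a (k+1)-color-critical graph, i.e., χ(F) = k+1 and there exists an edge e with χ(F - e) = k, and let l be at least the maximum size of a color class in some proper k-coloring of F - e. Then the graph K_k^+(l,...,l), obtained from the complete k-partite graph with all parts of size l by adding one edge inside the first part, contains a subgraph isomorphic to F. -/
/-- `K_k^+(l,…,l)`: the complete `k`-partite graph with all parts of size `l`,
with one extra edge (between the first two vertices of the first part) added
inside the first part. -/
def KkPlus (k l : ℕ) : SimpleGraph (Fin k × Fin l) where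
  Adj a b := a.1 ≠ b.1 ∨
    (a ≠ b ∧ a.1.val = 0 ∧ b.1.val = 0 ∧ a.2.val ≤ 1 ∧ b.2.val ≤ 1)
  symm := by
    constructor
    rintro a b (h | ⟨h1, h2, h3, h4, h5⟩)
    · exact Or.inl h.symm
    · exact Or.inr ⟨h1.symm, h3, h2, h5, h4⟩
  loopless := by
    constructor
    rintro a (h | ⟨h1, -⟩)
    · exact h rfl
    · exact h1 rfl

/-- If `F` is `(k+1)`-color-critical with critical edge `e`, and `l` bounds the
sizes of the color classes of some proper `k`-coloring of `F - e`, then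
`K_k^+(l,…,l)` contains a copy of `F`. -/
theorem stmt_15 {α : Type*} [Fintype α] [DecidableEq α] (k l : ℕ)
    (F : SimpleGraph α)
    (hchi : F.chromaticNumber = (k + 1 : ℕ))
    (e : Sym2 α) (he : e ∈ F.edgeSet)
    (hcrit : (F.deleteEdges {e}).chromaticNumber = (k : ℕ))
    (C : α → Fin k)
    (hC : ∀ u v : α, (F.deleteEdges {e}).Adj u v → C u ≠ C v)
    (hl : ∀ c : Fin k, (Finset.univ.filter (fun v => C v = c)).card ≤ l) :
    ∃ f : α → Fin k × Fin l, Function.Injective f ∧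
      ∀ u v : α, F.Adj u v → (KkPlus k l).Adj (f u) (f v) := by
  induction e using Sym2.ind with
  | _ a b =>
  have hab : F.Adj a b := he
  have hne : a ≠ b := hab.ne
  have kpos : 0 < k := (C a).pos
  set z : Fin k := ⟨0, kpos⟩ with hz
  set C' : α → Fin k := fun v => Equiv.swap (C a) z (C v) with hC'
  have hC'eq : ∀ u v : α, C' u = C' v ↔ C u = C v := fun u v =>
    (Equiv.swap (C a) z).apply_eq_iff_eq
  set ι := Fintype.equivFin α with hι
  set ρ : α → ℕ := fun v => if v = a then 0 else if v = b then 1 else (ι v).val + 2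
    with hρdef
  have hρa : ρ a = 0 := by simp [hρdef]
  have hρb : ρ b = 1 := by simp [hρdef, hne.symm]
  have hρ : Function.Injective ρ := by
    intro u v h
    simp only [hρdef] at h
    split_ifs at h with h1 h2 h3 h4 h5 h6 h7 h8 <;>
      first
        | (subst_vars; rfl)
        | omega
        | exact ι.injective (Fin.val_injective (by omega))
  set S : α → Finset α :=
    fun v => Finset.univ.filter (fun w => C w = C v ∧ ρ w < ρ v) with hS
  have hcard : ∀ v, (S v).card < l := by
    intro v
    have hsub : S v ⊆ Finset.univ.filter (fun w => C w = C v) := by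
      intro w hw
      simp only [hS, Finset.mem_filter] at hw ⊢
      exact ⟨Finset.mem_univ w, hw.2.1⟩
    have hvmem : v ∈ Finset.univ.filter (fun w => C w = C v) := by simp
    have hvnot : v ∉ S v := by simp [hS]
    have := Finset.card_lt_card
      ((Finset.ssubset_iff_of_subset hsub).mpr ⟨v, hvmem, hvnot⟩)
    exact lt_of_lt_of_le this (hl (C v))
  refine ⟨fun v => (C' v, ⟨(S v).card, hcard v⟩), ?_, ?_⟩
  · -- injectivity
    intro u v huv
    have h1 : C' u = C' v := congrArg Prod.fst huv
    have h2 : (S u).card = (S v).card := congrArg Fin.val (congrArg Prod.snd huv)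
    have hcc : C u = C v := (hC'eq u v).mp h1
    by_contra hneq
    rcases lt_trichotomy (ρ u) (ρ v) with hlt | heq | hlt
    · have hsub : S u ⊆ S v := by
        intro w hw
        simp only [hS, Finset.mem_filter] at hw ⊢
        exact ⟨Finset.mem_univ w, hw.2.1.trans hcc, hw.2.2.trans hlt⟩
      have humem : u ∈ S v := by simp [hS, hcc, hlt]
      have hunot : u ∉ S u := by simp [hS]
      have := Finset.card_lt_card
        ((Finset.ssubset_iff_of_subset hsub).mpr ⟨u, humem, hunot⟩)
      omega
    · exact hneq (hρ heq)
    · have hsub : S v ⊆ S u := by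
        intro w hw
        simp only [hS, Finset.mem_filter] at hw ⊢
        exact ⟨Finset.mem_univ w, hw.2.1.trans hcc.symm, hw.2.2.trans hlt⟩
      have humem : v ∈ S u := by simp [hS, hcc.symm, hlt]
      have hunot : v ∉ S v := by simp [hS]
      have := Finset.card_lt_card
        ((Finset.ssubset_iff_of_subset hsub).mpr ⟨v, humem, hunot⟩)
      omega
  · -- adjacency
    intro u v huv
    by_cases hcc : C u = C v
    · -- must be the special edge
      have hse : s(u, v) = s(a, b) := by
        by_contra hsne
        have : (F.deleteEdges {s(a, b)}).Adj u v := by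
          rw [SimpleGraph.deleteEdges_adj]
          exact ⟨huv, by simpa using hsne⟩
        exact hC u v this hcc
      have hSa : (S a).card = 0 := by
        rw [Finset.card_eq_zero]
        ext w
        simp only [hS, Finset.mem_filter, hρa, Finset.notMem_empty, iff_false]
        rintro ⟨-, -, h⟩
        omega
      have hcab : C a = C b := by
        rcases Sym2.eq_iff.mp hse with ⟨rfl, rfl⟩ | ⟨rfl, rfl⟩
        · exact hcc
        · exact hcc.symm
      have hSb : (S b).card = 1 := by
        have : S b = {a} := by
          ext w
          simp only [hS, Finset.mem_filter, hρb, Finset.mem_singleton, Finset.mem_univ,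
            true_and]
          constructor
          · rintro ⟨-, hlt1⟩
            by_contra hwa
            have hwb : w ≠ b := by
              intro hh; subst hh; omega
            simp [hρdef, hwa, hwb] at hlt1
          · rintro rfl
            exact ⟨hcab, by omega⟩
        rw [this, Finset.card_singleton]
      have hC'a : C' a = z := by simp [hC']
      have hC'b : C' b = z := by simp [hC', ← hcab]
      rcases Sym2.eq_iff.mp hse with ⟨rfl, rfl⟩ | ⟨rfl, rfl⟩
      · refine Or.inr ⟨?_, by simp [hC'a, hz], by simp [hC'b, hz], by simp [hSa],
          by simp [hSb]⟩
        intro hcontra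
        have := congrArg Fin.val (congrArg Prod.snd hcontra)
        simp [hSa, hSb] at this
      · refine Or.inr ⟨?_, by simp [hC'b, hz], by simp [hC'a, hz], by simp [hSb],
          by simp [hSa]⟩
        intro hcontra
        have := congrArg Fin.val (congrArg Prod.snd hcontra)
        simp [hSa, hSb] at this
    · exact Or.inl (fun h => hcc ((hC'eq u v).mp h))
end

section
/- Let k ≥ r ≥ 2 and suppose m, k, r satisfy m(k-1) ≡ 0 (mod r-1) and m²k(k-1) ≡ 0 (mod r(r-1)), and a 2-GDD of group type m^k with block size r and index 1 exists on n = mk points. Let F be any graph with chromatic number k+1. Then the hypergraph H of the GDD is F^r-free, is m(k-1)/(r-1)-regular, and hence has spectral radius exactly n(k-1)/(k(r-1)). -/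
open Finset

/-- `H` contains a copy of the `r`-expansion of the graph with edge set `EG`
(a set of 2-element vertex sets on `α`): there is an injection `g` of the
vertices and enlargement sets `S e` of size `r-2`, disjoint from the image of
`g` and pairwise disjoint, such that every enlarged edge is an edge of `H`. -/
def ContainsExpansion {α V : Type*} [DecidableEq α] [DecidableEq V]
    (r : ℕ) (EG : Finset (Finset α)) (H : Finset (Finset V)) : Prop :=
  ∃ (g : α → V) (S : Finset α → Finset V),
    Function.Injective g ∧
    (∀ e ∈ EG, (S e).card = r - 2) ∧
    (∀ e ∈ EG, ∀ v ∈ S e, v ∉ Set.range g) ∧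
    (∀ e ∈ EG, ∀ f ∈ EG, e ≠ f → Disjoint (S e) (S f)) ∧
    (∀ e ∈ EG, e.image g ∪ S e ∈ H)

/-- The unordered pair `e : Sym2 α` as a two-element finset. -/
def sym2ToFinset {α : Type*} [DecidableEq α] (e : Sym2 α) : Finset α :=
  Sym2.lift ⟨fun a b => ({a, b} : Finset α), fun a b => Finset.pair_comm a b⟩ e

/-- Let `H` be the hypergraph of a 2-GDD of group type `m^k`, block size `r`
and index 1 (with the divisibility conditions), on `n = mk` points, and let
`F` be a graph with chromatic number `k+1`. Then `H` is `F^r`-free, is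
`m(k-1)/(r-1)`-regular, and has spectral radius exactly `n(k-1)/(k(r-1))`. -/
theorem stmt_18 {α V : Type*} [Fintype α] [DecidableEq α] [Fintype V] [DecidableEq V]
    (m k r : ℕ) (hr : 2 ≤ r) (hrk : r ≤ k)
    (hdiv1 : (r - 1) ∣ m * (k - 1))
    (hdiv2 : r * (r - 1) ∣ m ^ 2 * k * (k - 1))
    (hn : Fintype.card V = m * k)
    (g : V → Fin k)
    (hgroups : ∀ i : Fin k, (Finset.univ.filter (fun v => g v = i)).card = m)
    (H : Finset (Finset V))
    (hblock : ∀ e ∈ H, e.card = r)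
    (hmeet : ∀ e ∈ H, ∀ i : Fin k, (e.filter (fun v => g v = i)).card ≤ 1)
    (hpair : ∀ x y : V, g x ≠ g y → ∃! e, e ∈ H ∧ x ∈ e ∧ y ∈ e)
    (F : SimpleGraph α) [DecidableRel F.Adj]
    (hchi : F.chromaticNumber = (k + 1 : ℕ)) :
    ¬ ContainsExpansion r (F.edgeFinset.image sym2ToFinset) H ∧
    (∀ v : V, (H.filter (fun e => v ∈ e)).card * (r - 1) = m * (k - 1)) ∧
    specRad H r = ((Fintype.card V : ℝ) * ((k : ℝ) - 1)) / ((k : ℝ) * ((r : ℝ) - 1)) := by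
  classical
  have hk2 : 2 ≤ k := le_trans hr hrk
  -- any two distinct vertices in a block lie in distinct groups
  have hdistinct : ∀ e ∈ H, ∀ x ∈ e, ∀ y ∈ e, x ≠ y → g x ≠ g y := by
    intro e he x hx y hy hxy hg
    have hsub : ({x, y} : Finset V) ⊆ e.filter (fun v => g v = g x) := by
      intro z hz
      rcases Finset.mem_insert.mp hz with rfl | hz
      · exact Finset.mem_filter.mpr ⟨hx, rfl⟩
      · rcases Finset.mem_singleton.mp hz with rfl
        exact Finset.mem_filter.mpr ⟨hy, hg.symm⟩
    have h2 : ({x, y} : Finset V).card = 2 := Finset.card_pair hxy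
    have := Finset.card_le_card hsub
    have := hmeet e he (g x)
    omega
  -- regularity
  have hreg : ∀ v : V, (H.filter (fun e => v ∈ e)).card * (r - 1) = m * (k - 1) := by
    intro v
    set Hv := H.filter (fun e => v ∈ e) with hHvdef
    have hdisj : ∀ e ∈ Hv, ∀ f ∈ Hv, e ≠ f → Disjoint (e.erase v) (f.erase v) := by
      intro e he f hf hef
      rw [Finset.disjoint_left]
      intro w hwe hwf
      obtain ⟨he', hve⟩ := Finset.mem_filter.mp he
      obtain ⟨hf', hvf⟩ := Finset.mem_filter.mp hf
      obtain ⟨hwv, hwe'⟩ := Finset.mem_erase.mp hwe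
      obtain ⟨-, hwf'⟩ := Finset.mem_erase.mp hwf
      have hgw : g w ≠ g v := hdistinct e he' w hwe' v hve hwv
      obtain ⟨u, -, huniq⟩ := hpair w v hgw
      exact hef ((huniq e ⟨he', hwe', hve⟩).trans (huniq f ⟨hf', hwf', hvf⟩).symm)
    have hbU : Hv.biUnion (fun e => e.erase v) = univ.filter (fun w => g w ≠ g v) := by
      ext w
      simp only [Finset.mem_biUnion, Finset.mem_erase, Finset.mem_filter,
        Finset.mem_univ, true_and, hHvdef]
      constructor
      · rintro ⟨e, ⟨he, hve⟩, hwv, hwe⟩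
        exact hdistinct e he w hwe v hve hwv
      · intro hgw
        obtain ⟨e, ⟨he, hwe, hve⟩, -⟩ := hpair w v hgw
        exact ⟨e, ⟨he, hve⟩, fun h => hgw (by rw [h]), hwe⟩
    have hcard1 : (Hv.biUnion (fun e => e.erase v)).card = Hv.card * (r - 1) := by
      rw [Finset.card_biUnion hdisj]
      rw [Finset.sum_congr rfl (fun e he => ?_), Finset.sum_const, smul_eq_mul]
      obtain ⟨he', hve⟩ := Finset.mem_filter.mp he
      rw [Finset.card_erase_of_mem hve, hblock e he']
    have hcard2 : (univ.filter (fun w => g w ≠ g v)).card = m * (k - 1) := by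
      have h := Finset.card_filter_add_card_filter_not
        (s := (univ : Finset V)) (p := fun w => g w = g v)
      simp only [Finset.card_univ, hn, hgroups] at h
      have h2 : (univ.filter (fun w => ¬ g w = g v)).card = (univ.filter (fun w => g w ≠ g v)).card := by
        apply Finset.card_bij (fun a _ => a) <;> simp
      have hmk : m * k - m = m * (k - 1) := by
        have : m * (k - 1) + m * 1 = m * k := by
          rw [← Nat.mul_add]; congr 1; omega
        omega
      omega
    rw [← hcard1, hbU, hcard2]
  -- F^r-freeness
  have hfree : ¬ ContainsExpansion r (F.edgeFinset.image sym2ToFinset) H := by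
    rintro ⟨gm, S, hginj, -, -, -, hmem⟩
    have hcol : F.Colorable k := by
      refine ⟨SimpleGraph.Coloring.mk (fun a => g (gm a)) ?_⟩
      intro a b hab heq
      have hab' : a ≠ b := F.ne_of_adj hab
      have hEG : ({a, b} : Finset α) ∈ F.edgeFinset.image sym2ToFinset :=
        Finset.mem_image.mpr ⟨s(a, b), SimpleGraph.mem_edgeFinset.mpr hab, rfl⟩
      have he := hmem _ hEG
      have hma : gm a ∈ ({a, b} : Finset α).image gm ∪ S {a, b} :=
        Finset.mem_union_left _ (Finset.mem_image_of_mem gm (by simp))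
      have hmb : gm b ∈ ({a, b} : Finset α).image gm ∪ S {a, b} :=
        Finset.mem_union_left _ (Finset.mem_image_of_mem gm (by simp))
      exact hdistinct _ he (gm a) hma (gm b) hmb (fun h => hab' (hginj h)) heq
    have hle := hcol.chromaticNumber_le
    rw [hchi] at hle
    have : (k : ℕ∞) < (k + 1 : ℕ) := by exact_mod_cast Nat.lt_succ_self k
    exact absurd hle (not_le.mpr this)
  refine ⟨hfree, hreg, ?_⟩
  -- spectral radius
  set d : ℕ := m * (k - 1) / (r - 1) with hddef
  have hr1 : 0 < r - 1 := by omega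
  have hd : d * (r - 1) = m * (k - 1) := Nat.div_mul_cancel hdiv1
  have hdeg : ∀ v : V, (H.filter (fun e => v ∈ e)).card = d := by
    intro v
    have := hreg v
    exact Nat.eq_of_mul_eq_mul_right hr1 (by omega)
  -- the RHS equals d
  have hrhs : ((Fintype.card V : ℝ) * ((k : ℝ) - 1)) / ((k : ℝ) * ((r : ℝ) - 1)) = (d : ℝ) := by
    have hdR : (d : ℝ) * ((r : ℝ) - 1) = (m : ℝ) * ((k : ℝ) - 1) := by
      have := hd
      have h1 : ((d * (r - 1) : ℕ) : ℝ) = ((m * (k - 1) : ℕ) : ℝ) := congrArg (Nat.cast : ℕ → ℝ) this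
      push_cast [Nat.cast_sub (by omega : 1 ≤ r), Nat.cast_sub (by omega : 1 ≤ k)] at h1
      linarith
    have hkne : (k : ℝ) ≠ 0 := by positivity
    have hrne : (r : ℝ) - 1 ≠ 0 := by
      have : (2 : ℝ) ≤ (r : ℝ) := by exact_mod_cast hr
      linarith
    rw [hn]
    push_cast
    field_simp
    nlinarith [hdR]
  rw [hrhs]
  -- now show specRad H r = d
  rcases Nat.eq_zero_or_pos m with hm0 | hmpos
  · -- V is empty; no eigenvectors exist
    have hVempty : IsEmpty V := by
      rw [← Fintype.card_eq_zero_iff]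
      rw [hn, hm0, zero_mul]
    have hset : { s : ℝ | ∃ lam : ℂ, IsTensorEig H r lam ∧ s = ‖lam‖ } = ∅ := by
      ext s
      simp only [Set.mem_setOf_eq, Set.mem_empty_iff_false, iff_false]
      rintro ⟨lam, ⟨x, hx0, -⟩, -⟩
      exact hx0 (funext fun v => (hVempty.false v).elim)
    rw [specRad, hset, Real.sSup_empty]
    have : d = 0 := by
      rw [hddef, hm0, zero_mul, Nat.zero_div]
    rw [this]; norm_num
  · have hVne : Nonempty V := by
      rw [← Fintype.card_pos_iff, hn]
      exact Nat.mul_pos hmpos (by omega)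
    -- d is an eigenvalue with eigenvector 1
    have heig : IsTensorEig H r (d : ℂ) := by
      refine ⟨fun _ => 1, ?_, ?_⟩
      · intro h
        obtain ⟨v⟩ := hVne
        have := congrFun h v
        simp at this
      · intro i
        rw [tensorApply]
        simp only [Finset.prod_const_one, Finset.sum_const, nsmul_eq_mul, mul_one, one_pow]
        rw [hdeg i]
    -- every eigenvalue has modulus ≤ d
    have hbound : ∀ lam : ℂ, IsTensorEig H r lam → ‖lam‖ ≤ d := by
      rintro lam ⟨x, hx0, hx⟩
      obtain ⟨i, -, hi⟩ := Finset.exists_max_image univ (fun v => ‖x v‖)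
        ⟨Classical.arbitrary V, Finset.mem_univ _⟩
      have hxi : 0 < ‖x i‖ := by
        rcases Function.ne_iff.mp hx0 with ⟨j, hj⟩
        calc 0 < ‖x j‖ := by
              simpa [norm_pos_iff] using hj
          _ ≤ ‖x i‖ := hi j (Finset.mem_univ j)
      have key : ‖lam‖ * ‖x i‖ ^ (r - 1)
          ≤ (d : ℝ) * ‖x i‖ ^ (r - 1) := by
        have h1 : ‖lam‖ * ‖x i‖ ^ (r - 1)
            = ‖tensorApply H x i‖ := by
          rw [hx i, norm_mul, norm_pow]
        rw [h1, tensorApply]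
        calc ‖∑ e ∈ H.filter (fun e => i ∈ e), ∏ v ∈ e.erase i, x v‖
            ≤ ∑ e ∈ H.filter (fun e => i ∈ e), ‖∏ v ∈ e.erase i, x v‖ := by
              exact norm_sum_le _ _
          _ ≤ ∑ e ∈ H.filter (fun e => i ∈ e), ‖x i‖ ^ (r - 1) := by
              refine Finset.sum_le_sum fun e he => ?_
              obtain ⟨he', hie⟩ := Finset.mem_filter.mp he
              rw [norm_prod]
              calc ∏ v ∈ e.erase i, ‖x v‖
                  ≤ ∏ _v ∈ e.erase i, ‖x i‖ :=
                    Finset.prod_le_prod (fun v _ => norm_nonneg _)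
                      (fun v _ => hi v (Finset.mem_univ v))
                _ = ‖x i‖ ^ (r - 1) := by
                    rw [Finset.prod_const, Finset.card_erase_of_mem hie, hblock e he']
          _ = (d : ℝ) * ‖x i‖ ^ (r - 1) := by
              rw [Finset.sum_const, hdeg i, nsmul_eq_mul]
      exact le_of_mul_le_mul_right key (pow_pos hxi _)
    -- conclude
    rw [specRad]
    have hmem : (d : ℝ) ∈ { s : ℝ | ∃ lam : ℂ, IsTensorEig H r lam ∧ s = ‖lam‖ } :=
      ⟨(d : ℂ), heig, by rw [Complex.norm_natCast]⟩
    apply le_antisymm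
    · apply csSup_le ⟨(d : ℝ), hmem⟩
      rintro s ⟨lam, hlam, rfl⟩
      exact hbound lam hlam
    · apply le_csSup ⟨(d : ℝ), ?_⟩ hmem
      rintro s ⟨lam, hlam, rfl⟩
      exact hbound lam hlam
end
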